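/- Let $r_1, r_2, e, m, q_2, a_q > 0$ with $r_1 \neq r_2$ and $a_q \neq q_2$. Then the characteristic polynomial $\lambda^4 + \frac{m(e q_2 r_2^2 + a_q r_1(e r_1 + 2 r_2))}{e(a_q r_1 + q_2 r_2)}\lambda^2 + \frac{a_q r_1 r_2 m^2 (a_q - q_2)(r_1 - r_2)}{e(a_q r_1 + q_2 r_2)^2}\lambda + \frac{a_q r_1 r_2 m^2 (r_1 + r_2)}{e(a_q r_1 + q_2 r_2)}$ has a complex root with strictly positive real part. -/

import Mathlib

open Polynomial in
lemma quartic_factor' (A B C : ℂ) : ∃ a b c d : ℂ, ∀ z : ℂ,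
    z^4 + A*z^2 + B*z + C = (z-a)*(z-b)*(z-c)*(z-d) := by
  set p : ℂ[X] := X^4 + Polynomial.C A * X^2 + Polynomial.C B * X + Polynomial.C C with hp
  have hmonic : p.Monic := by
    have h3 : (Polynomial.C A * X^2 + Polynomial.C B * X + Polynomial.C C : ℂ[X]).degree < 4 := by
      have : (Polynomial.C A * X^2 + Polynomial.C B * X + Polynomial.C C : ℂ[X]).degree ≤ 3 := by
        compute_degree!
      exact lt_of_le_of_lt this (by decide)
    simpa [hp, add_assoc] using monic_X_pow_add (n := 4) h3
  have hdeg : p.natDegree = 4 := by rw [hp]; compute_degree!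
  have hsplits : p.Splits := IsAlgClosed.splits p
  have hcard : p.roots.card = 4 := by
    rw [← hdeg]; exact (splits_iff_card_roots.mp hsplits)
  have hlen : p.roots.toList.length = 4 := by rw [Multiset.length_toList, hcard]
  obtain ⟨a, b, c, d, hl⟩ : ∃ a b c d, p.roots.toList = [a, b, c, d] := by
    rcases hL : p.roots.toList with _ | ⟨a, _ | ⟨b, _ | ⟨c, _ | ⟨d, _ | ⟨x, t⟩⟩⟩⟩⟩ <;>
      rw [hL] at hlen <;> simp_all
  have hroots : p.roots = ↑[a, b, c, d] := by rw [← hl, Multiset.coe_toList]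
  have hfact := hsplits.eq_prod_roots_of_monic hmonic
  rw [hroots] at hfact
  refine ⟨a, b, c, d, fun z => ?_⟩
  have := congrArg (Polynomial.eval z) hfact
  simpa [hp, mul_assoc] using this

theorem stmt14 (r1 r2 e m q2 aq : ℝ)
    (hr1 : r1 > 0) (hr2 : r2 > 0) (he : e > 0) (hm : m > 0)
    (hq2 : q2 > 0) (haq : aq > 0) (hrr : r1 ≠ r2) (haqq : aq ≠ q2) :
    let A : ℝ := m*(e*q2*r2^2 + aq*r1*(e*r1 + 2*r2)) / (e*(aq*r1 + q2*r2))
    let B : ℝ := aq*r1*r2*m^2*(aq - q2)*(r1 - r2) / (e*(aq*r1 + q2*r2)^2)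
    let C : ℝ := aq*r1*r2*m^2*(r1 + r2) / (e*(aq*r1 + q2*r2))
    ∃ z : ℂ, z^4 + (A : ℂ)*z^2 + (B : ℂ)*z + (C : ℂ) = 0 ∧ 0 < z.re := by
  intro A B C
  have hB : B ≠ 0 := by
    show aq*r1*r2*m^2*(aq - q2)*(r1 - r2) / (e*(aq*r1 + q2*r2)^2) ≠ 0
    apply div_ne_zero
    · exact mul_ne_zero (mul_ne_zero (by positivity) (sub_ne_zero.mpr haqq))
        (sub_ne_zero.mpr hrr)
    · positivity
  obtain ⟨a, b, c, d, h⟩ := quartic_factor' (A : ℂ) (B : ℂ) (C : ℂ)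
  by_contra hcon
  push_neg at hcon
  have hroot : ∀ w : ℂ, (w-a)*(w-b)*(w-c)*(w-d) = 0 → w.re ≤ 0 := by
    intro w hw
    exact hcon w (by rw [h w, hw])
  have ha := hroot a (by simp)
  have hb := hroot b (by rw [show (b-a)*(b-b)*(b-c)*(b-d) = (b-b)*((b-a)*(b-c)*(b-d)) by ring]; simp)
  have hc := hroot c (by rw [show (c-a)*(c-b)*(c-c)*(c-d) = (c-c)*((c-a)*(c-b)*(c-d)) by ring]; simp)
  have hd := hroot d (by rw [show (d-a)*(d-b)*(d-c)*(d-d) = (d-d)*((d-a)*(d-b)*(d-c)) by ring]; simp)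
  have hsum : a + b + c + d = 0 := by
    linear_combination (-1/6 : ℂ) * h 1 + (1/6 : ℂ) * h (-1) + (1/12 : ℂ) * h 2
      - (1/12 : ℂ) * h (-2)
  have he3 : a*b*c + a*b*d + a*c*d + b*c*d = -(B : ℂ) := by
    linear_combination (2/3 : ℂ) * h 1 - (2/3 : ℂ) * h (-1) - (1/12 : ℂ) * h 2
      + (1/12 : ℂ) * h (-2)
  have hsre : a.re + b.re + c.re + d.re = 0 := by
    have := congrArg Complex.re hsum; simpa using this
  have ha0 : a.re = 0 := by linarith
  have hb0 : b.re = 0 := by linarith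
  have hc0 : c.re = 0 := by linarith
  have hd0 : d.re = 0 := by linarith
  have := congrArg Complex.re he3
  simp [Complex.mul_re, Complex.mul_im, ha0, hb0, hc0, hd0] at this
  exact hB (by linarith)
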